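/- Let G be a connected reductive group over a field F, and let Y ∈ Lie(G)(F) be a regular semisimple element that is conjugate by an element g ∈ G(F^s) to an element X ∈ Lie(M)(F), where M is a Levi subgroup of an F-parabolic subgroup of G. Then Y is G(F)-conjugate to an element of Lie(M)(F). -/

import Mathlib

/-!
STATEMENT 14.  Let `G` be a connected reductive group over a field `F` and let
`Y ∈ Lie(G)(F)` be a regular semisimple element that is conjugate by an element
`g ∈ G(F^s)` to an element `X ∈ Lie(M)(F)`, where `M` is a Levi subgroup of an
`F`-parabolic subgroup of `G`.  Then `Y` is `G(F)`-conjugate to an element of `Lie(M)(F)`.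

We formalize at the level of `F^s`-points with Galois descent data:
* `Gs = G(F^s)` with the Galois action of `Γ = Gal(F^s|F)`, and `G(F)` realized as the
  fixed points;
* `ad : Gs →* (Vs ≃+ Vs)` the adjoint action on `Vs = Lie(G)(F^s)`, `galV` the Galois
  action on `Vs`, compatible via `hcompat`;
* `Ms = M(F^s)` a Galois-stable subgroup and `ms = Lie(M)(F^s)` an `Ad(Ms)`-stable,
  Galois-stable subgroup of `Vs`; `Lie(M)(F)` is the set of Galois-fixed elements of `ms`;
* regularity of `Y` (hence of `X = Ad(g)Y`) enters through `hreg` : the centralizer of `X`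
  in `G(F^s)` is contained in `M(F^s)`;
* the Borel–Tits theorem (F^s-conjugate F-parabolics are F-conjugate; F-Levi subgroups of a
  parabolic are conjugate by an F-point) enters through the descent hypothesis `hdescent`:
  an element `u ∈ G(F^s)` whose "cocycle" `σ ↦ u·σ(u)⁻¹` has values in `M(F^s)` can be
  modified by an element of `M(F^s)` into a Galois-fixed element.
-/
/-- The multiplicative group structure on `V ≃+ V` (composition, `e₁ * e₂ = e₂.trans e₁`)
that older Mathlib provided via `AddAut`; `AddAut` is now an additive group. -/
instance instGroupAddEquivSelfOld (V : Type*) [Add V] : Group (V ≃+ V) :=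
  inferInstanceAs (Group (Multiplicative (AddAut V)))

theorem stmt14 {Γ Gs Vs : Type*} [Group Γ] [Group Gs] [AddCommGroup Vs]
    [MulDistribMulAction Γ Gs]
    (ad : Gs →* (Vs ≃+ Vs)) (galV : Γ →* (Vs ≃+ Vs))
    (hcompat : ∀ (σ : Γ) (g : Gs) (v : Vs), galV σ (ad g v) = ad (σ • g) (galV σ v))
    (Ms : Subgroup Gs) (hMstab : ∀ σ : Γ, ∀ g ∈ Ms, σ • g ∈ Ms)
    (ms : AddSubgroup Vs)
    (hmsstab : ∀ σ : Γ, ∀ v ∈ ms, galV σ v ∈ ms)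
    (hms : ∀ g ∈ Ms, ∀ v ∈ ms, ad g v ∈ ms)
    (Y : Vs) (hY : ∀ σ : Γ, galV σ Y = Y)
    (X : Vs) (hXm : X ∈ ms) (hXfix : ∀ σ : Γ, galV σ X = X)
    (g : Gs) (hg : ad g Y = X)
    (hreg : ∀ h : Gs, ad h X = X → h ∈ Ms)
    (hdescent : ∀ u : Gs, (∀ σ : Γ, u * (σ • u)⁻¹ ∈ Ms) →
      ∃ m ∈ Ms, ∀ σ : Γ, σ • (m * u) = m * u) :
    ∃ h : Gs, (∀ σ : Γ, σ • h = h) ∧ ad h Y ∈ ms := by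
  have hcoc : ∀ σ : Γ, g * (σ • g)⁻¹ ∈ Ms := by
    intro σ
    apply hreg
    have h1 : ad (σ • g) Y = X := by
      have := hcompat σ g Y
      rw [hY σ] at this
      rw [← this, hg, hXfix]
    have h2 : ad (σ • g)⁻¹ X = Y := by
      rw [← h1]; simp
      exact (ad (σ • g)).symm_apply_apply Y
    rw [map_mul]
    show ad g (ad (σ • g)⁻¹ X) = X
    rw [h2, hg]
  obtain ⟨m, hm, hfix⟩ := hdescent g hcoc
  refine ⟨m * g, hfix, ?_⟩
  rw [map_mul]
  show ad m (ad g Y) ∈ ms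
  rw [hg]
  exact hms m hm X hXm
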